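/- arXiv:1109.6212 — 3 statements merged into one kernel-verified Lean document; each statement's English description precedes it below -/
import Mathlib

section
/- Let p > 2, w̄(s) = (cosh s)^{−2/(p−2)}, I₂ = ∫_ℝ w̄², I_p = ∫_ℝ w̄^p, J₂ = ∫_ℝ (w̄')². Then I_p = 4 I₂/(p+2) and J₂ = 4 I₂/((p+2)(p−2)). -/
open Real MeasureTheory Filter Set

lemma sech_even_integrableOn_Iic {f : ℝ → ℝ} (he : ∀ x, f (-x) = f x)
    (hf : IntegrableOn f (Ioi 0)) : IntegrableOn f (Iic 0) := by
  rw [show (Iic (0:ℝ)) = Iic (0:ℝ) from rfl, ← Measure.map_neg_eq_self (volume : Measure ℝ)]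
  have m : MeasurableEmbedding fun x : ℝ => -x := (Homeomorph.neg ℝ).measurableEmbedding
  rw [m.integrableOn_map_iff]
  simp_rw [Function.comp_def, he, neg_preimage, neg_Iic, neg_zero]
  exact Iff.mpr integrableOn_Ici_iff_integrableOn_Ioi hf

lemma integrable_sech (β : ℝ) (hβ : 0 < β) :
    Integrable (fun s : ℝ => Real.cosh s ^ (-β)) := by
  have hcont : Continuous (fun s : ℝ => Real.cosh s ^ (-β)) :=
    Real.continuous_cosh.rpow_const fun x => Or.inl (Real.cosh_pos x).ne'
  have hIoi : IntegrableOn (fun s : ℝ => Real.cosh s ^ (-β)) (Ioi 0) := by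
    have hbd : IntegrableOn (fun s : ℝ => 2 ^ β * Real.exp (-β * s)) (Ioi 0) :=
      (exp_neg_integrableOn_Ioi 0 hβ).const_mul _
    refine hbd.mono' hcont.aestronglyMeasurable.restrict ?_
    filter_upwards [ae_restrict_mem measurableSet_Ioi] with s _
    rw [Real.norm_eq_abs, abs_of_pos (Real.rpow_pos_of_pos (Real.cosh_pos s) _)]
    have h1 : Real.exp s / 2 ≤ Real.cosh s := by
      rw [Real.cosh_eq]
      have := (Real.exp_pos (-s)).le
      linarith
    calc Real.cosh s ^ (-β) ≤ (Real.exp s / 2) ^ (-β) :=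
          Real.rpow_le_rpow_of_nonpos (by positivity) h1 (by linarith)
      _ = 2 ^ β * Real.exp (-β * s) := by
          rw [Real.div_rpow (Real.exp_pos s).le (by norm_num), ← Real.exp_mul,
            Real.rpow_neg (by norm_num : (0:ℝ) ≤ 2)]
          rw [division_def, inv_inv]
          ring_nf
  have hIic : IntegrableOn (fun s : ℝ => Real.cosh s ^ (-β)) (Iic 0) :=
    sech_even_integrableOn_Iic (fun x => by rw [Real.cosh_neg]) hIoi
  have := hIic.union hIoi
  rwa [Iic_union_Ioi, integrableOn_univ] at this

lemma hasDerivAt_sechG (β : ℝ) (s : ℝ) :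
    HasDerivAt (fun t => Real.sinh t * Real.cosh t ^ (-(β + 1)))
      ((β + 1) * Real.cosh s ^ (-(β + 2)) - β * Real.cosh s ^ (-β)) s := by
  have hc : (0:ℝ) < Real.cosh s := Real.cosh_pos s
  have h1 : HasDerivAt (fun t => Real.cosh t ^ (-(β + 1)))
      (Real.sinh s * (-(β + 1)) * Real.cosh s ^ (-(β + 1) - 1)) s :=
    (Real.hasDerivAt_cosh s).rpow_const (Or.inl hc.ne')
  have h2 : HasDerivAt (fun t => Real.sinh t * Real.cosh t ^ (-(β + 1))) _ s :=
    (Real.hasDerivAt_sinh s).mul h1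
  convert h2 using 1
  have e1 : -(β + 1) - 1 = -(β + 2) := by ring
  rw [e1]
  have hs2 : Real.sinh s * Real.sinh s = Real.cosh s * Real.cosh s - 1 := by
    have := Real.sinh_sq s
    nlinarith [Real.sinh_sq s]
  have hA : Real.cosh s * Real.cosh s ^ (-(β + 1)) = Real.cosh s ^ (-β) := by
    rw [show (-β) = 1 + (-(β + 1)) by ring, Real.rpow_add hc, Real.rpow_one]
  have hB : Real.cosh s * (Real.cosh s * Real.cosh s ^ (-(β + 2))) = Real.cosh s ^ (-β) := by
    rw [show (-β) = 1 + (1 + (-(β + 2))) by ring, Real.rpow_add hc, Real.rpow_one,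
      Real.rpow_add hc, Real.rpow_one]
  linear_combination -hA + (β + 1) * Real.cosh s ^ (-(β + 2)) * hs2 + (β + 1) * hB

lemma abs_sechG_le (β : ℝ) (s : ℝ) :
    ‖Real.sinh s * Real.cosh s ^ (-(β + 1))‖ ≤ Real.cosh s ^ (-β) := by
  have hc : (0:ℝ) < Real.cosh s := Real.cosh_pos s
  have habs : |Real.sinh s| ≤ Real.cosh s := by
    rw [abs_le]
    have h1 := Real.exp_pos s
    have h2 := Real.exp_pos (-s)
    have h3 := Real.cosh_add_sinh s
    have h4 := Real.cosh_sub_sinh s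
    constructor <;> nlinarith
  rw [norm_mul, Real.norm_eq_abs, Real.norm_eq_abs,
    abs_of_pos (Real.rpow_pos_of_pos hc _)]
  calc |Real.sinh s| * Real.cosh s ^ (-(β + 1))
      ≤ Real.cosh s * Real.cosh s ^ (-(β + 1)) := by
        apply mul_le_mul_of_nonneg_right habs (Real.rpow_pos_of_pos hc _).le
    _ = Real.cosh s ^ (-β) := by
        rw [show (-β) = 1 + (-(β + 1)) by ring, Real.rpow_add hc, Real.rpow_one]

lemma tendsto_sech_top (β : ℝ) (hβ : 0 < β) :
    Tendsto (fun s : ℝ => Real.cosh s ^ (-β)) atTop (nhds 0) := by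
  apply (tendsto_rpow_neg_atTop hβ).comp
  have hden : Tendsto (fun s : ℝ => Real.exp s / 2) atTop atTop :=
    Real.tendsto_exp_atTop.atTop_div_const (by norm_num)
  refine tendsto_atTop_mono (fun s => ?_) hden
  rw [Real.cosh_eq]
  have := (Real.exp_pos (-s)).le
  linarith

lemma tendsto_sech_bot (β : ℝ) (hβ : 0 < β) :
    Tendsto (fun s : ℝ => Real.cosh s ^ (-β)) atBot (nhds 0) := by
  have := (tendsto_sech_top β hβ).comp tendsto_neg_atBot_atTop
  simpa [Function.comp_def, Real.cosh_neg] using this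

lemma sech_rec (β : ℝ) (hβ : 0 < β) :
    (β + 1) * ∫ s : ℝ, Real.cosh s ^ (-(β + 2)) = β * ∫ s : ℝ, Real.cosh s ^ (-β) := by
  have hi0 := integrable_sech β hβ
  have hi2 := integrable_sech (β + 2) (by linarith)
  set g : ℝ → ℝ := fun s => Real.sinh s * Real.cosh s ^ (-(β + 1)) with hg
  set g' : ℝ → ℝ := fun s => (β + 1) * Real.cosh s ^ (-(β + 2)) - β * Real.cosh s ^ (-β) with hg'
  have hg'int : Integrable g' := (hi2.const_mul _).sub (hi0.const_mul _)
  have hT : Tendsto g atTop (nhds 0) :=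
    squeeze_zero_norm (fun s => abs_sechG_le β s) (tendsto_sech_top β hβ)
  have hB : Tendsto g atBot (nhds 0) :=
    squeeze_zero_norm (fun s => abs_sechG_le β s) (tendsto_sech_bot β hβ)
  have h1 : ∫ s in Ioi (0:ℝ), g' s = 0 - g 0 :=
    integral_Ioi_of_hasDerivAt_of_tendsto' (fun x _ => hasDerivAt_sechG β x)
      hg'int.integrableOn hT
  have h2 : ∫ s in Iic (0:ℝ), g' s = g 0 - 0 :=
    integral_Iic_of_hasDerivAt_of_tendsto' (fun x _ => hasDerivAt_sechG β x)
      hg'int.integrableOn hB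
  have hG0 : g 0 = 0 := by simp [hg]
  have htot : ∫ s : ℝ, g' s = 0 := by
    rw [← intervalIntegral.integral_Iic_add_Ioi (b := (0:ℝ)) hg'int.integrableOn hg'int.integrableOn, h1, h2, hG0]
    ring
  rw [hg'] at htot
  rw [integral_sub (hi2.const_mul _) (hi0.const_mul _), integral_const_mul,
    integral_const_mul] at htot
  linarith

/-- For `p > 2` and `w̄(s) = (cosh s)^{−2/(p−2)}`, with `I₂ = ∫ w̄²`, `I_p = ∫ w̄^p`,
`J₂ = ∫ (w̄')²`, one has `I_p = 4 I₂/(p+2)` and `J₂ = 4 I₂/((p+2)(p−2))`. -/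
theorem stmt6 (p : ℝ) (hp : 2 < p)
    (w : ℝ → ℝ) (hw : ∀ s : ℝ, w s = Real.cosh s ^ (-(2 / (p - 2))))
    (I2 Ip J2 : ℝ)
    (hI2 : I2 = ∫ s : ℝ, w s ^ (2 : ℝ))
    (hIp : Ip = ∫ s : ℝ, w s ^ p)
    (hJ2 : J2 = ∫ s : ℝ, deriv w s ^ (2 : ℕ)) :
    Ip = 4 * I2 / (p + 2) ∧ J2 = 4 * I2 / ((p + 2) * (p - 2)) := by
  have hp2 : (0:ℝ) < p - 2 := by linarith
  have hpp : (0:ℝ) < p + 2 := by linarith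
  set α : ℝ := 2 / (p - 2) with hα
  have hα0 : 0 < α := div_pos two_pos hp2
  set β : ℝ := 2 * α with hβdef
  have hβ0 : 0 < β := by positivity
  have hβ4 : (p - 2) * β = 4 := by rw [hβdef, hα]; field_simp; ring
  have hwfun : w = fun s => Real.cosh s ^ (-α) := funext hw
  have hI2' : I2 = ∫ s : ℝ, Real.cosh s ^ (-β) := by
    rw [hI2]; congr 1; funext s
    rw [hw s, ← Real.rpow_mul (Real.cosh_pos s).le]
    congr 1; rw [hβdef]; ring
  have hIp' : Ip = ∫ s : ℝ, Real.cosh s ^ (-(β + 2)) := by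
    have key : α * (p - 2) = 2 := by rw [hα]; field_simp
    rw [hIp]; congr 1; funext s
    rw [hw s, ← Real.rpow_mul (Real.cosh_pos s).le]
    congr 1
    rw [hβdef]
    linear_combination -key
  have hderiv : ∀ s, deriv w s = Real.sinh s * (-α) * Real.cosh s ^ (-α - 1) := by
    intro s
    rw [hwfun]
    exact ((Real.hasDerivAt_cosh s).rpow_const (Or.inl (Real.cosh_pos s).ne')).deriv
  have hi0 := integrable_sech β hβ0
  have hi2 := integrable_sech (β + 2) (by linarith)
  have hJ2' : J2 = α ^ 2 * (I2 - Ip) := by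
    have : J2 = ∫ s : ℝ, α ^ 2 * (Real.cosh s ^ (-β) - Real.cosh s ^ (-(β + 2))) := by
      rw [hJ2]; congr 1; funext s
      rw [hderiv s]
      have hc := Real.cosh_pos s
      have h1 : Real.cosh s ^ (-α - 1) * Real.cosh s ^ (-α - 1)
          = Real.cosh s ^ (-(β + 2)) := by
        rw [← Real.rpow_add hc]; congr 1; rw [hβdef]; ring
      have h2 : Real.cosh s * (Real.cosh s * Real.cosh s ^ (-(β + 2)))
          = Real.cosh s ^ (-β) := by
        rw [show (-β) = 1 + (1 + (-(β + 2))) by ring, Real.rpow_add hc, Real.rpow_one,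
          Real.rpow_add hc, Real.rpow_one]
      have hs2 : Real.sinh s * Real.sinh s = Real.cosh s * Real.cosh s - 1 := by
        nlinarith [Real.sinh_sq s]
      linear_combination α ^ 2 * Real.sinh s ^ 2 * h1
        + α ^ 2 * Real.cosh s ^ (-(β + 2)) * hs2 + α ^ 2 * h2
    rw [this, integral_const_mul, integral_sub hi0 hi2, ← hI2', ← hIp']
  have hIpI2 : (β + 1) * Ip = β * I2 := by
    rw [hIp', hI2']; exact sech_rec β hβ0
  have key : (p + 2) * Ip = 4 * I2 := by
    linear_combination (p - 2) * hIpI2 + (I2 - Ip) * hβ4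
  have h1 : Ip = 4 * I2 / (p + 2) := by
    rw [eq_div_iff hpp.ne']; linarith
  refine ⟨h1, ?_⟩
  rw [hJ2', h1, hα]
  field_simp
  ring
end

section
/- For γ = (p+2)/(2(p−2)) with 2 < p < 6, and V_*(s) = A^{p−2}/cosh²(Bs) with A^{p−2} = pΛ/2, B = (p−2)√Λ/2 (Λ > 0), one has c_LT(γ) ∫_ℝ V_*^{γ+1/2} ds = Λ^γ, where c_LT(γ) = ((2γ−1)/(2γ+1))^{γ−1/2} · (2γ/(2γ+1)) · Γ(γ)/(√π Γ(γ+1/2)). -/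
open Real MeasureTheory

section AuxLemmas
open Set

lemma tanh_exp (t : ℝ) : Real.tanh t = (Real.exp (2*t) - 1) / (Real.exp (2*t) + 1) := by
  rw [Real.tanh_eq_sinh_div_cosh, Real.sinh_eq, Real.cosh_eq, two_mul, Real.exp_add]
  have h1 := Real.exp_pos t
  have h2 := Real.exp_pos (-t)
  have h3 : Real.exp t * Real.exp (-t) = 1 := by rw [← Real.exp_add]; simp
  field_simp
  nlinarith [h3]

noncomputable def _root_.artanh (x : ℝ) : ℝ := (Real.log (1 + x) - Real.log (1 - x)) / 2

lemma tanh_artanh {x : ℝ} (hx : x ∈ Ioo (-1:ℝ) 1) : Real.tanh (_root_.artanh x) = x := by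
  obtain ⟨h1, h2⟩ := hx
  have hp : (0:ℝ) < 1 + x := by linarith
  have hm : (0:ℝ) < 1 - x := by linarith
  rw [tanh_exp, _root_.artanh]
  rw [show 2 * ((Real.log (1+x) - Real.log (1-x))/2) = Real.log ((1+x)/(1-x)) by
    rw [Real.log_div hp.ne' hm.ne']; ring]
  rw [Real.exp_log (by positivity)]
  field_simp
  ring

lemma artanh_tanh (u : ℝ) : _root_.artanh (Real.tanh u) = u := by
  have hc := Real.cosh_pos u
  have h1 : 1 + Real.tanh u = Real.exp u / Real.cosh u := by
    rw [Real.tanh_eq_sinh_div_cosh]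
    field_simp
    exact Real.cosh_add_sinh u
  have h2 : 1 - Real.tanh u = Real.exp (-u) / Real.cosh u := by
    rw [Real.tanh_eq_sinh_div_cosh]
    field_simp
    exact Real.cosh_sub_sinh u
  rw [_root_.artanh, h1, h2, Real.log_div (by positivity) hc.ne',
    Real.log_div (by positivity) hc.ne', Real.log_exp, Real.log_exp]
  ring

lemma tanh_mem_Ioo (u : ℝ) : Real.tanh u ∈ Ioo (-1:ℝ) 1 := by
  have hc := Real.cosh_pos u
  have h1 : Real.cosh u + Real.sinh u = Real.exp u := Real.cosh_add_sinh u
  have h2 : Real.cosh u - Real.sinh u = Real.exp (-u) := Real.cosh_sub_sinh u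
  have e1 := Real.exp_pos u
  have e2 := Real.exp_pos (-u)
  rw [Real.tanh_eq_sinh_div_cosh]
  constructor
  · rw [lt_div_iff₀ hc]; nlinarith
  · rw [div_lt_one hc]; nlinarith

lemma artanh_image : _root_.artanh '' Ioo (-1:ℝ) 1 = Set.univ := by
  apply Set.eq_univ_of_forall
  intro u
  exact ⟨Real.tanh u, _root_.tanh_mem_Ioo u, _root_.artanh_tanh u⟩

lemma artanh_inj : Set.InjOn _root_.artanh (Ioo (-1:ℝ) 1) := by
  intro x hx y hy h
  have := congrArg Real.tanh h
  rwa [_root_.tanh_artanh hx, _root_.tanh_artanh hy] at this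

lemma artanh_deriv {x : ℝ} (hx : x ∈ Ioo (-1:ℝ) 1) :
    HasDerivAt _root_.artanh (1 / (1 - x^2)) x := by
  obtain ⟨h1, h2⟩ := hx
  have hp : (0:ℝ) < 1 + x := by linarith
  have hm : (0:ℝ) < 1 - x := by linarith
  have d1 : HasDerivAt (fun y : ℝ => Real.log (1 + y)) (1/(1+x)) x := by
    simpa using ((hasDerivAt_id x).const_add 1).log hp.ne'
  have d2 : HasDerivAt (fun y : ℝ => Real.log (1 - y)) (-(1/(1-x))) x := by
    have : HasDerivAt (fun y : ℝ => 1 - y) (-1) x := by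
      exact (hasDerivAt_id' x).const_sub 1
    simpa [div_eq_mul_inv] using this.log hm.ne'
  have := (d1.sub d2).div_const 2
  refine (this : HasDerivAt _root_.artanh _ x).congr_deriv ?_
  have hne : (1 - x^2) ≠ 0 := by nlinarith
  field_simp
  ring

lemma cosh_artanh_sq {x : ℝ} (hx : x ∈ Ioo (-1:ℝ) 1) :
    1 / Real.cosh (_root_.artanh x) ^ 2 = 1 - x ^ 2 := by
  have hc := Real.cosh_pos (_root_.artanh x)
  have ht : Real.tanh (_root_.artanh x) = x := _root_.tanh_artanh hx
  have hid := Real.cosh_sq_sub_sinh_sq (_root_.artanh x)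
  have key : (1:ℝ) - (Real.sinh (_root_.artanh x) / Real.cosh (_root_.artanh x)) ^ 2
      = 1 / Real.cosh (_root_.artanh x) ^ 2 := by
    field_simp
    exact hid
  calc 1 / Real.cosh (_root_.artanh x) ^ 2
      = 1 - (Real.sinh (_root_.artanh x) / Real.cosh (_root_.artanh x)) ^ 2 := key.symm
    _ = 1 - (Real.tanh (_root_.artanh x)) ^ 2 := by rw [Real.tanh_eq_sinh_div_cosh]
    _ = 1 - x ^ 2 := by rw [ht]

lemma subst_key (ν : ℝ) :
    ∫ u : ℝ, (1 / Real.cosh u ^ 2) ^ ν =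
      ∫ x in Ioo (-1:ℝ) 1, (1 - x ^ 2) ^ (ν - 1) := by
  have h := integral_image_eq_integral_abs_deriv_smul (measurableSet_Ioo)
    (fun x hx => (_root_.artanh_deriv hx).hasDerivWithinAt) _root_.artanh_inj
    (fun u => (1 / Real.cosh u ^ 2) ^ ν)
  rw [_root_.artanh_image] at h
  rw [← setIntegral_univ, h]
  refine setIntegral_congr_fun measurableSet_Ioo fun x hx => ?_
  obtain ⟨h1, h2⟩ := hx
  have hpos : (0:ℝ) < 1 - x ^ 2 := by nlinarith
  rw [_root_.cosh_artanh_sq ⟨h1, h2⟩, smul_eq_mul, abs_of_pos (by positivity),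
    Real.rpow_sub hpos, Real.rpow_one]
  field_simp


lemma real_beta' (a b : ℝ) (ha : 0 < a) (hb : 0 < b) :
    ∫ x in (0:ℝ)..1, x ^ (a - 1) * (1 - x) ^ (b - 1) =
      Real.Gamma a * Real.Gamma b / Real.Gamma (a + b) := by
  have key : Complex.Gamma a * Complex.Gamma b
      = Complex.Gamma (a + b) * Complex.betaIntegral a b :=
    Complex.Gamma_mul_Gamma_eq_betaIntegral (by simpa using ha) (by simpa using hb)
  have hbeta : Complex.betaIntegral a b
      = ((∫ x in (0:ℝ)..1, x ^ (a - 1) * (1 - x) ^ (b - 1) : ℝ) : ℂ) := by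
    rw [Complex.betaIntegral, ← intervalIntegral.integral_ofReal]
    refine intervalIntegral.integral_congr fun x hx => ?_
    rw [Set.uIcc_of_le (by norm_num : (0:ℝ) ≤ 1)] at hx
    rw [show ((a:ℂ) - 1) = ((a - 1 : ℝ) : ℂ) by push_cast; ring,
      show ((b:ℂ) - 1) = ((b - 1 : ℝ) : ℂ) by push_cast; ring,
      show (1 - (x:ℂ)) = ((1 - x : ℝ) : ℂ) by push_cast; ring,
      ← Complex.ofReal_cpow hx.1, ← Complex.ofReal_cpow (by linarith [hx.2]),
      ← Complex.ofReal_mul]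
  rw [hbeta, ← Complex.ofReal_add, Complex.Gamma_ofReal, Complex.Gamma_ofReal,
    Complex.Gamma_ofReal, ← Complex.ofReal_mul, ← Complex.ofReal_mul] at key
  have hG : Real.Gamma (a + b) ≠ 0 := (Real.Gamma_pos_of_pos (by linarith)).ne'
  have h2 := Complex.ofReal_inj.mp key
  field_simp
  linarith [h2]


lemma lemL (ν : ℝ) (hν : 1 < ν) :
    ∫ x in Ioo (-1:ℝ) 1, (1 - x ^ 2) ^ (ν - 1) =
      Real.sqrt π * Real.Gamma ν / Real.Gamma (ν + 1/2) := by
  have h1 : (∫ x in Ioo (-1:ℝ) 1, (1 - x ^ 2) ^ (ν - 1))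
      = ∫ x in (-1:ℝ)..1, (1 - x ^ 2) ^ (ν - 1) := by
    rw [intervalIntegral.integral_of_le (by norm_num : (-1:ℝ) ≤ 1),
      integral_Ioc_eq_integral_Ioo]
  have h2 : (∫ t in (0:ℝ)..1, (fun x => (1 - x ^ 2) ^ (ν - 1)) (2 * t + -1))
      = (2:ℝ)⁻¹ • ∫ x in (2*0 + -1 : ℝ)..(2*1 + -1 : ℝ), (1 - x ^ 2) ^ (ν - 1) :=
    intervalIntegral.integral_comp_mul_add (fun x => (1 - x ^ 2) ^ (ν - 1)) two_ne_zero (-1)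
  norm_num at h2
  have h3 : (∫ t in (0:ℝ)..1, (1 - (2*t + -1) ^ 2) ^ (ν - 1))
      = ∫ t in (0:ℝ)..1, (4:ℝ) ^ (ν - 1) * (t ^ (ν - 1) * (1 - t) ^ (ν - 1)) := by
    refine intervalIntegral.integral_congr fun t ht => ?_
    rw [Set.uIcc_of_le (by norm_num : (0:ℝ) ≤ 1)] at ht
    rw [show (1 - (2*t + -1) ^ 2 : ℝ) = 4 * (t * (1 - t)) by ring,
      Real.mul_rpow (by norm_num) (mul_nonneg ht.1 (by linarith [ht.2])),
      Real.mul_rpow ht.1 (by linarith [ht.2])]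
  have hν0 : 0 < ν := by linarith
  have hbeta := real_beta' ν ν hν0 hν0
  rw [intervalIntegral.integral_const_mul, hbeta] at h3
  have hI : (∫ x in (-1:ℝ)..1, (1 - x ^ 2) ^ (ν - 1))
      = 2 * ((4:ℝ) ^ (ν - 1) * (Real.Gamma ν * Real.Gamma ν / Real.Gamma (ν + ν))) := by
    rw [← h3]; linarith [h2]
  rw [h1, hI]
  have hdup := Real.Gamma_mul_Gamma_add_half ν
  have hΓν := Real.Gamma_pos_of_pos hν0
  have hΓh := Real.Gamma_pos_of_pos (by linarith : (0:ℝ) < ν + 1/2)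
  have hΓ2 := Real.Gamma_pos_of_pos (by linarith : (0:ℝ) < 2 * ν)
  have hsπ : (0:ℝ) < Real.sqrt π := Real.sqrt_pos.mpr Real.pi_pos
  have h4 : (4:ℝ) ^ (ν - 1) = (2:ℝ) ^ (ν-1) * (2:ℝ) ^ (ν-1) := by
    rw [show (4:ℝ) = 2*2 by norm_num, Real.mul_rpow (by norm_num) (by norm_num)]
  have hpow : (2:ℝ)^(ν-1) * (2:ℝ)^(ν-1) * (2:ℝ)^(1-2*ν) = 2⁻¹ := by
    rw [← Real.rpow_add two_pos, ← Real.rpow_add two_pos,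
      show (ν-1+(ν-1)+(1-2*ν)) = (-1:ℝ) by ring, Real.rpow_neg_one]
  have hp2 : (0:ℝ) < (2:ℝ) ^ (1-2*ν) := Real.rpow_pos_of_pos two_pos _
  rw [show ν + ν = 2*ν by ring, h4]
  have hpow2 : 2 * ((2:ℝ)^(ν-1) * (2:ℝ)^(ν-1)) * (2:ℝ)^(1-2*ν) = 1 := by
    rw [mul_assoc, hpow]; norm_num
  set G1 := Real.Gamma ν
  set G2 := Real.Gamma (ν + 1/2)
  set G3 := Real.Gamma (2*ν)
  set c := (2:ℝ)^(ν-1)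
  set d := (2:ℝ)^(1-2*ν)
  field_simp
  linear_combination (2*c*c) * hdup + (Real.sqrt π * G3) * hpow2

end AuxLemmas

/-- With `γ = (p+2)/(2(p−2))`, `2 < p < 6`, `Λ > 0` and
`V⋆(s) = (pΛ/2)/cosh²((p−2)√Λ s/2)`, one has `c_LT(γ) ∫ V⋆^{γ+1/2} ds = Λ^γ`, where
`c_LT(γ) = ((2γ−1)/(2γ+1))^{γ−1/2} (2γ/(2γ+1)) Γ(γ)/(√π Γ(γ+1/2))`. -/
theorem stmt10 (p Λ γ : ℝ) (hp : 2 < p) (hp6 : p < 6) (hΛ : 0 < Λ)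
    (hγ : γ = (p + 2) / (2 * (p - 2)))
    (B : ℝ) (hB : B = (p - 2) * Real.sqrt Λ / 2)
    (V : ℝ → ℝ) (hV : ∀ s : ℝ, V s = (p * Λ / 2) / Real.cosh (B * s) ^ 2)
    (cLT : ℝ)
    (hcLT : cLT = ((2 * γ - 1) / (2 * γ + 1)) ^ (γ - 1 / 2) * (2 * γ / (2 * γ + 1)) *
      Real.Gamma γ / (Real.sqrt π * Real.Gamma (γ + 1 / 2))) :
    cLT * ∫ s : ℝ, V s ^ (γ + 1 / 2) = Λ ^ γ := by
  have hq : (0:ℝ) < p - 2 := by linarith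
  have hγ1 : 1 < γ := by
    rw [hγ, lt_div_iff₀ (by linarith)]; linarith
  have hν1 : 1 < γ + 1/2 := by linarith
  have hA : (0:ℝ) < p * Λ / 2 := by positivity
  have hsΛ : (0:ℝ) < Real.sqrt Λ := Real.sqrt_pos.mpr hΛ
  have hBpos : 0 < B := by rw [hB]; positivity
  -- rewrite the integrand
  have e1 : (fun s : ℝ => V s ^ (γ + 1/2))
      = fun s => (p * Λ / 2) ^ (γ + 1/2) *
        (fun u => (1 / Real.cosh u ^ 2) ^ (γ + 1/2)) (B * s) := by
    funext s
    have hc := Real.cosh_pos (B * s)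
    rw [hV s, show (p * Λ / 2) / Real.cosh (B*s) ^ 2
        = (p * Λ / 2) * (1 / Real.cosh (B*s) ^ 2) by ring,
      Real.mul_rpow hA.le (by positivity)]
  have hint : (∫ s : ℝ, V s ^ (γ + 1/2))
      = (p * Λ / 2) ^ (γ + 1/2) * (B⁻¹ *
        (Real.sqrt π * Real.Gamma (γ + 1/2) / Real.Gamma (γ + 1))) := by
    rw [e1, MeasureTheory.integral_const_mul,
      MeasureTheory.Measure.integral_comp_mul_left
        (fun u => (1 / Real.cosh u ^ 2) ^ (γ + 1/2)) B,
      subst_key, lemL _ hν1, smul_eq_mul, abs_of_pos (inv_pos.mpr hBpos),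
      show γ + 1/2 + 1/2 = γ + 1 by ring]
  rw [hint, hcLT]
  -- Gamma simplifications
  have hΓγ : 0 < Real.Gamma γ := Real.Gamma_pos_of_pos (by linarith)
  have hΓν : 0 < Real.Gamma (γ + 1/2) := Real.Gamma_pos_of_pos (by linarith)
  have hΓ1 : Real.Gamma (γ + 1) = γ * Real.Gamma γ := Real.Gamma_add_one (by linarith)
  have hsπ : (0:ℝ) < Real.sqrt π := Real.sqrt_pos.mpr Real.pi_pos
  rw [hΓ1]
  -- numeric identities
  have hfrac : (2*γ - 1)/(2*γ + 1) = (p/2)⁻¹ := by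
    rw [hγ]; field_simp; ring
  have hexp1 : γ - 1/2 = 2/(p-2) := by rw [hγ]; field_simp; ring
  have hexp2 : γ + 1/2 = p/(p-2) := by rw [hγ]; field_simp; ring
  have hp0 : (0:ℝ) < p/2 := by linarith
  have hS : ((2*γ - 1)/(2*γ + 1)) ^ (γ - 1/2) = (p/2) ^ (-(2/(p-2))) := by
    rw [hfrac, hexp1, Real.inv_rpow hp0.le, ← Real.rpow_neg hp0.le]
  have hT : (p * Λ / 2) ^ (γ + 1/2) = (p/2) ^ (p/(p-2)) * Λ ^ (p/(p-2)) := by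
    rw [hexp2, show p * Λ / 2 = (p/2) * Λ by ring, Real.mul_rpow hp0.le hΛ.le]
  have hPP : (p/2) ^ (-(2/(p-2))) * (p/2) ^ (p/(p-2)) = p/2 := by
    rw [← Real.rpow_add hp0, show -(2/(p-2)) + p/(p-2) = 1 by field_simp; ring, Real.rpow_one]
  have hΛΛ : Λ ^ (p/(p-2)) = Λ ^ γ * Real.sqrt Λ := by
    rw [Real.sqrt_eq_rpow, ← Real.rpow_add hΛ, hγ]
    congr 1
    field_simp
    ring
  rw [hS, hT, hΛΛ, hB]
  have hγpos : (0:ℝ) < γ := by linarith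
  have hΛγ : (0:ℝ) < Λ ^ γ := Real.rpow_pos_of_pos hΛ _
  have h2γ1 : (0:ℝ) < 2*γ + 1 := by linarith
  have hγid : (2*γ + 1)*(p - 2) = 2*p := by rw [hγ]; field_simp; ring
  set S1 := (p/2) ^ (-(2/(p-2))) with hS1
  set S2 := (p/2) ^ (p/(p-2)) with hS2
  set Gg := Real.Gamma γ
  set Gn := Real.Gamma (γ + 1/2)
  set L := Λ ^ γ
  set sl := Real.sqrt Λ
  set sp := Real.sqrt π
  have hS1pos : 0 < S1 := Real.rpow_pos_of_pos hp0 _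
  have hS2pos : 0 < S2 := Real.rpow_pos_of_pos hp0 _
  field_simp
  linear_combination 4 * hPP - hγid
end

section
/- For 2 < p < 6 and θ ∈ (1/2, 1], the constant 𝔠(p,θ) defined as in the paper satisfies 𝔠(p,θ) ≥ 1 with equality if and only if θ = 1. -/
open Real Filter Finset Topology

noncomputable def AA (b c v : ℝ) : ℝ :=
  2*((b+v) * Real.log (b+v)) - 2*((c+v) * Real.log (c+v))
    - (2*b+v) * Real.log (2*b+v) + (2*c+v) * Real.log (2*c+v)

lemma hasDerivAt_xlogx {y : ℝ} (h : y ≠ 0) :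
    HasDerivAt (fun u : ℝ => u * Real.log u) (Real.log y + 1) y := by
  simpa [mul_inv_cancel₀ h, Pi.mul_def] using (hasDerivAt_id y).mul (Real.hasDerivAt_log h)

lemma M_anti : AntitoneOn (fun y : ℝ => Real.log (y+1/2) - Real.log (y-1/2) - y⁻¹)
    (Set.Ioi (1/2:ℝ)) := by
  have hD : ∀ y ∈ Set.Ioi (1/2:ℝ),
      HasDerivAt (fun y : ℝ => Real.log (y+1/2) - Real.log (y-1/2) - y⁻¹)
        ((y+1/2)⁻¹ - (y-1/2)⁻¹ + (y^2)⁻¹) y := by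
    intro y hy
    have hy' : (1/2:ℝ) < y := hy
    have h1 : y + 1/2 ≠ 0 := by positivity
    have h2 : y - 1/2 ≠ 0 := by intro h; rw [sub_eq_zero] at h; linarith
    have h3 : y ≠ 0 := by positivity
    have d1 : HasDerivAt (fun y : ℝ => Real.log (y+1/2)) ((y+1/2)⁻¹) y := by
      simpa [Function.comp_def] using (Real.hasDerivAt_log h1).comp y ((hasDerivAt_id y).add_const (1/2))
    have d2 : HasDerivAt (fun y : ℝ => Real.log (y-1/2)) ((y-1/2)⁻¹) y := by
      simpa [Function.comp_def] using (Real.hasDerivAt_log h2).comp y ((hasDerivAt_id y).sub_const (1/2))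
    have d3 : HasDerivAt (fun y : ℝ => y⁻¹) (-(y^2)⁻¹) y := hasDerivAt_inv h3
    have := (d1.sub d2).sub d3
    simpa [sub_neg_eq_add, Pi.sub_def] using this
  refine antitoneOn_of_deriv_nonpos (convex_Ioi _) ?_ ?_ ?_
  · exact fun y hy => (hD y hy).continuousAt.continuousWithinAt
  · rw [interior_Ioi]
    exact fun y hy => (hD y hy).differentiableAt.differentiableWithinAt
  · rw [interior_Ioi]
    intro y hy
    rw [(hD y hy).deriv]
    have hy' : (1/2:ℝ) < y := hy
    have hA : (0:ℝ) < y + 1/2 := by linarith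
    have hB : (0:ℝ) < y - 1/2 := by linarith
    have hy2 : (0:ℝ) < y^2 := by positivity
    rw [sub_add_eq_add_sub, sub_nonpos, inv_eq_one_div, inv_eq_one_div, inv_eq_one_div,
      div_add_div _ _ hA.ne' hy2.ne', div_le_div_iff₀ (mul_pos hA hy2) hB]
    nlinarith [hy2, hA, hB]

lemma step {b c : ℝ} (hc : 1/2 < c) (hcb : c ≤ b) (u : ℝ) (hu : 0 ≤ u) :
    2*Real.log (b+u) - 2*Real.log (c+u) - Real.log (2*b+u) + Real.log (2*c+u)
      ≤ AA b c (u+1/2) - AA b c (u-1/2) := by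
  simp only [AA]
  have hder : ∀ x ∈ Set.Icc c b,
      HasDerivAt (fun x : ℝ =>
        2*((x+(u+1/2)) * Real.log (x+(u+1/2))) - (2*x+(u+1/2)) * Real.log (2*x+(u+1/2))
          - 2*((x+(u-1/2)) * Real.log (x+(u-1/2))) + (2*x+(u-1/2)) * Real.log (2*x+(u-1/2))
          - 2*Real.log (x+u) + Real.log (2*x+u))
        (2*(Real.log (x+(u+1/2)) + 1) - (Real.log (2*x+(u+1/2)) + 1)*2
          - 2*(Real.log (x+(u-1/2)) + 1) + (Real.log (2*x+(u-1/2)) + 1)*2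
          - 2*(x+u)⁻¹ + (2*x+u)⁻¹*2) x := by
    intro x hx
    have hxc : c ≤ x := hx.1
    have hx2 : (1/2:ℝ) < x := lt_of_lt_of_le hc hxc
    have n1 : x+(u+1/2) ≠ 0 := by positivity
    have n2 : 2*x+(u+1/2) ≠ 0 := by positivity
    have n3 : x+(u-1/2) ≠ 0 := by intro h; nlinarith [h]
    have n4 : 2*x+(u-1/2) ≠ 0 := by intro h; nlinarith [h]
    have n5 : x+u ≠ 0 := by positivity
    have n6 : 2*x+u ≠ 0 := by positivity
    have i1 : HasDerivAt (fun x : ℝ => x+(u+1/2)) 1 x := (hasDerivAt_id x).add_const _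
    have i2 : HasDerivAt (fun x : ℝ => 2*x+(u+1/2)) 2 x := by
      simpa using ((hasDerivAt_id x).const_mul 2).add_const (u+1/2)
    have i3 : HasDerivAt (fun x : ℝ => x+(u-1/2)) 1 x := (hasDerivAt_id x).add_const _
    have i4 : HasDerivAt (fun x : ℝ => 2*x+(u-1/2)) 2 x := by
      simpa using ((hasDerivAt_id x).const_mul 2).add_const (u-1/2)
    have p1 : HasDerivAt (fun x : ℝ => (x+(u+1/2)) * Real.log (x+(u+1/2)))
        (Real.log (x+(u+1/2)) + 1) x := by
      simpa [Function.comp_def] using (hasDerivAt_xlogx n1).comp x i1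
    have p2 : HasDerivAt (fun x : ℝ => (2*x+(u+1/2)) * Real.log (2*x+(u+1/2)))
        ((Real.log (2*x+(u+1/2)) + 1)*2) x := by
      simpa [Function.comp_def] using (hasDerivAt_xlogx n2).comp x i2
    have p3 : HasDerivAt (fun x : ℝ => (x+(u-1/2)) * Real.log (x+(u-1/2)))
        (Real.log (x+(u-1/2)) + 1) x := by
      simpa [Function.comp_def] using (hasDerivAt_xlogx n3).comp x i3
    have p4 : HasDerivAt (fun x : ℝ => (2*x+(u-1/2)) * Real.log (2*x+(u-1/2)))
        ((Real.log (2*x+(u-1/2)) + 1)*2) x := by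
      simpa [Function.comp_def] using (hasDerivAt_xlogx n4).comp x i4
    have l1 : HasDerivAt (fun x : ℝ => Real.log (x+u)) ((x+u)⁻¹) x := by
      simpa [Function.comp_def] using (Real.hasDerivAt_log n5).comp x ((hasDerivAt_id x).add_const u)
    have l2 : HasDerivAt (fun x : ℝ => Real.log (2*x+u)) ((2*x+u)⁻¹*2) x := by
      have i6 : HasDerivAt (fun x : ℝ => 2*x+u) 2 x := by
        simpa using ((hasDerivAt_id x).const_mul 2).add_const u
      simpa [Function.comp_def] using (Real.hasDerivAt_log n6).comp x i6
    exact (((((p1.const_mul 2).sub p2).sub (p3.const_mul 2)).add p4).sub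
      (l1.const_mul 2)).add l2
  have hmono : MonotoneOn (fun x : ℝ =>
      2*((x+(u+1/2)) * Real.log (x+(u+1/2))) - (2*x+(u+1/2)) * Real.log (2*x+(u+1/2))
        - 2*((x+(u-1/2)) * Real.log (x+(u-1/2))) + (2*x+(u-1/2)) * Real.log (2*x+(u-1/2))
        - 2*Real.log (x+u) + Real.log (2*x+u)) (Set.Icc c b) := by
    refine monotoneOn_of_deriv_nonneg (convex_Icc c b) ?_ ?_ ?_
    · exact fun x hx => (hder x hx).continuousAt.continuousWithinAt
    · rw [interior_Icc]
      exact fun x hx =>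
        (hder x (Set.Ioo_subset_Icc_self hx)).differentiableAt.differentiableWithinAt
    · rw [interior_Icc]
      intro x hx
      rw [(hder x (Set.Ioo_subset_Icc_self hx)).deriv]
      have hx2 : (1/2:ℝ) < x := lt_of_lt_of_le hc hx.1.le
      have m1 : x+u ∈ Set.Ioi (1/2:ℝ) := by simp only [Set.mem_Ioi]; linarith
      have m2 : 2*x+u ∈ Set.Ioi (1/2:ℝ) := by simp only [Set.mem_Ioi]; linarith
      have hle : x+u ≤ 2*x+u := by linarith
      have hM := M_anti m1 m2 hle
      simp only [] at hM
      rw [show x+(u+1/2) = x+u+1/2 by ring, show 2*x+(u+1/2) = 2*x+u+1/2 by ring,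
        show x+(u-1/2) = x+u-1/2 by ring, show 2*x+(u-1/2) = 2*x+u-1/2 by ring]
      linarith [hM]
  have h2 := hmono (Set.left_mem_Icc.2 hcb) (Set.right_mem_Icc.2 hcb) hcb
  simp only [] at h2
  linarith [h2]

lemma AA_nonpos {b c : ℝ} (hc : 0 < c) (hcb : c ≤ b) {v : ℝ} (hv : 0 ≤ v) :
    AA b c v ≤ 0 := by
  have hder : ∀ x ∈ Set.Icc c b,
      HasDerivAt (fun x : ℝ => 2*((x+v) * Real.log (x+v)) - (2*x+v) * Real.log (2*x+v))
        (2*(Real.log (x+v) + 1) - (Real.log (2*x+v) + 1)*2) x := by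
    intro x hx
    have hxc : c ≤ x := hx.1
    have n1 : x+v ≠ 0 := by
      have : (0:ℝ) < x+v := by linarith
      exact this.ne'
    have n2 : 2*x+v ≠ 0 := by
      have : (0:ℝ) < 2*x+v := by linarith
      exact this.ne'
    have i1 : HasDerivAt (fun x : ℝ => x+v) 1 x := (hasDerivAt_id x).add_const _
    have i2 : HasDerivAt (fun x : ℝ => 2*x+v) 2 x := by
      simpa using ((hasDerivAt_id x).const_mul 2).add_const v
    have p1 : HasDerivAt (fun x : ℝ => (x+v) * Real.log (x+v)) (Real.log (x+v) + 1) x := by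
      simpa [Function.comp_def] using (hasDerivAt_xlogx n1).comp x i1
    have p2 : HasDerivAt (fun x : ℝ => (2*x+v) * Real.log (2*x+v))
        ((Real.log (2*x+v) + 1)*2) x := by
      simpa [Function.comp_def] using (hasDerivAt_xlogx n2).comp x i2
    exact (p1.const_mul 2).sub p2
  have hanti : AntitoneOn (fun x : ℝ =>
      2*((x+v) * Real.log (x+v)) - (2*x+v) * Real.log (2*x+v)) (Set.Icc c b) := by
    refine antitoneOn_of_deriv_nonpos (convex_Icc c b) ?_ ?_ ?_
    · exact fun x hx => (hder x hx).continuousAt.continuousWithinAt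
    · rw [interior_Icc]
      exact fun x hx =>
        (hder x (Set.Ioo_subset_Icc_self hx)).differentiableAt.differentiableWithinAt
    · rw [interior_Icc]
      intro x hx
      rw [(hder x (Set.Ioo_subset_Icc_self hx)).deriv]
      have hxc : c < x := hx.1
      have h1 : (0:ℝ) < x + v := by linarith
      have h2 : x + v ≤ 2*x + v := by linarith
      have := Real.log_le_log h1 h2
      linarith
  have h2 := hanti (Set.left_mem_Icc.2 hcb) (Set.right_mem_Icc.2 hcb) hcb
  simp only [] at h2
  simp only [AA]
  linarith [h2]

lemma keyGamma {b c : ℝ} (hc : 1/2 < c) (hcb : c ≤ b) :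
    AA b c (-(1/2)) ≤ 2*Real.log (Real.Gamma b) - 2*Real.log (Real.Gamma c)
      - Real.log (Real.Gamma (2*b)) + Real.log (Real.Gamma (2*c)) := by
  have hc0 : (0:ℝ) < c := by linarith
  have hb0 : (0:ℝ) < b := by linarith
  have h2b : (0:ℝ) < 2*b := by linarith
  have h2c : (0:ℝ) < 2*c := by linarith
  have hsum : ∀ n : ℕ, ∑ j ∈ Finset.range (n+1),
      (2*Real.log (b+(j:ℝ)) - 2*Real.log (c+(j:ℝ))
        - Real.log (2*b+(j:ℝ)) + Real.log (2*c+(j:ℝ)))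
      ≤ AA b c ((n:ℝ)+1/2) - AA b c (-(1/2)) := by
    intro n
    have hterm : ∀ j ∈ Finset.range (n+1),
        2*Real.log (b+(j:ℝ)) - 2*Real.log (c+(j:ℝ))
          - Real.log (2*b+(j:ℝ)) + Real.log (2*c+(j:ℝ))
        ≤ (fun i : ℕ => AA b c ((i:ℝ)-1/2)) (j+1) - (fun i : ℕ => AA b c ((i:ℝ)-1/2)) j := by
      intro j _
      have hst := step hc hcb (j:ℝ) (Nat.cast_nonneg j)
      have e1 : ((j:ℝ)+1) - 1/2 = (j:ℝ)+1/2 := by ring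
      simp only [Nat.cast_add, Nat.cast_one, e1]
      exact hst
    refine (Finset.sum_le_sum hterm).trans_eq ?_
    rw [Finset.sum_range_sub (fun i : ℕ => AA b c ((i:ℝ)-1/2))]
    have e2 : ((n+1:ℕ):ℝ) - 1/2 = (n:ℝ)+1/2 := by push_cast; ring
    have e3 : ((0:ℕ):ℝ) - 1/2 = -(1/2:ℝ) := by norm_num
    rw [e2, e3]
  have hgs : ∀ s : ℝ, 0 < s → Tendsto (fun n => Real.log (Real.GammaSeq s n)) atTop
      (𝓝 (Real.log (Real.Gamma s))) := fun s hs =>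
    (Real.GammaSeq_tendsto_Gamma s).log (Real.Gamma_pos_of_pos hs).ne'
  have htend : Tendsto (fun n => 2*Real.log (Real.GammaSeq b n) - 2*Real.log (Real.GammaSeq c n)
      - Real.log (Real.GammaSeq (2*b) n) + Real.log (Real.GammaSeq (2*c) n)) atTop
      (𝓝 (2*Real.log (Real.Gamma b) - 2*Real.log (Real.Gamma c)
        - Real.log (Real.Gamma (2*b)) + Real.log (Real.Gamma (2*c)))) :=
    ((((hgs b hb0).const_mul 2).sub ((hgs c hc0).const_mul 2)).sub (hgs (2*b) h2b)).add
      (hgs (2*c) h2c)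
  refine ge_of_tendsto htend ?_
  filter_upwards [eventually_ge_atTop 1] with n hn
  have hn0 : (0:ℝ) < (n:ℝ) := by exact_mod_cast Nat.pos_of_ne_zero (by omega)
  have lgs : ∀ s : ℝ, 0 < s → Real.log (Real.GammaSeq s n)
      = s * Real.log (n:ℝ) + Real.log (Nat.factorial n : ℝ)
        - ∑ j ∈ Finset.range (n+1), Real.log (s + (j:ℝ)) := by
    intro s hs
    have hprod : ∀ j ∈ Finset.range (n+1), s + (j:ℝ) ≠ 0 := fun j _ => by positivity
    have hfac : ((Nat.factorial n : ℕ):ℝ) ≠ 0 := by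
      exact_mod_cast (Nat.factorial_pos n).ne'
    rw [Real.GammaSeq, Real.log_div (by positivity) (Finset.prod_ne_zero_iff.2 hprod),
      Real.log_mul (by positivity) hfac, Real.log_rpow hn0, Real.log_prod hprod]
  have hsum4 : ∑ j ∈ Finset.range (n+1),
      (2*Real.log (b+(j:ℝ)) - 2*Real.log (c+(j:ℝ))
        - Real.log (2*b+(j:ℝ)) + Real.log (2*c+(j:ℝ)))
      = 2*(∑ j ∈ Finset.range (n+1), Real.log (b+(j:ℝ)))
        - 2*(∑ j ∈ Finset.range (n+1), Real.log (c+(j:ℝ)))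
        - (∑ j ∈ Finset.range (n+1), Real.log (2*b+(j:ℝ)))
        + (∑ j ∈ Finset.range (n+1), Real.log (2*c+(j:ℝ))) := by
    rw [Finset.sum_add_distrib, Finset.sum_sub_distrib, Finset.sum_sub_distrib,
      ← Finset.mul_sum, ← Finset.mul_sum]
  have hA := AA_nonpos hc0 hcb (v := (n:ℝ)+1/2) (by positivity)
  have e1 := lgs b hb0
  have e2 := lgs c hc0
  have e3 := lgs (2*b) h2b
  have e4 := lgs (2*c) h2c
  have hs := hsum n
  linarith [hs, hA, e1, e2, e3, e4, hsum4]

lemma Gpos (p θ : ℝ) (hp : 2 < p) (hθ1 : 1 / 2 < θ) (hθlt : θ < 1)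
    (hpθ : 0 < 2 - p * (1 - θ)) :
    0 < (p+2)*Real.log (p+2) - ((2*θ-1)*p+2)*Real.log ((2*θ-1)*p+2)
      + 2*((2-p*(1-θ)) * Real.log ((2-p*(1-θ))/2))
      + (2*(p-2)) * (2*((p/(p-2) + -(1/2)) * Real.log (p/(p-2) + -(1/2)))
          - 2*((θ*p/(p-2) + -(1/2)) * Real.log (θ*p/(p-2) + -(1/2)))
          - (2*(p/(p-2)) + -(1/2)) * Real.log (2*(p/(p-2)) + -(1/2))
          + (2*(θ*p/(p-2)) + -(1/2)) * Real.log (2*(θ*p/(p-2)) + -(1/2))) := by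
  have hp2 : (0:ℝ) < p - 2 := by linarith
  have hp0 : (0:ℝ) < p := by linarith
  have hθ2 : θ ≤ 1 := hθlt.le
  set G : ℝ → ℝ := fun t => (p+2)*Real.log (p+2) - ((2*t-1)*p+2)*Real.log ((2*t-1)*p+2)
      + 2*((2-p*(1-t)) * Real.log ((2-p*(1-t))/2))
      + (2*(p-2)) * (2*((p/(p-2) + -(1/2)) * Real.log (p/(p-2) + -(1/2)))
          - 2*((t*p/(p-2) + -(1/2)) * Real.log (t*p/(p-2) + -(1/2)))
          - (2*(p/(p-2)) + -(1/2)) * Real.log (2*(p/(p-2)) + -(1/2))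
          + (2*(t*p/(p-2)) + -(1/2)) * Real.log (2*(t*p/(p-2)) + -(1/2))) with hGdef
  have hfacts : ∀ t ∈ Set.Icc θ 1, (0 < 2 - p*(1-t)) ∧ (0 < (2*t-1)*p+2)
      ∧ (0 < t*p/(p-2) + -(1/2)) ∧ (0 < 2*(t*p/(p-2)) + -(1/2)) := by
    intro t ht
    have h1 : 0 < 2 - p*(1-t) := by nlinarith [mul_nonneg hp0.le (sub_nonneg.2 ht.1)]
    have h2 : 0 < (2*t-1)*p+2 := by linarith
    have e1 : t*p/(p-2) + -(1/2) = (2*t*p - p + 2)/(2*(p-2)) := by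
      field_simp; ring
    have e2 : 2*(t*p/(p-2)) + -(1/2) = (4*t*p - p + 2)/(2*(p-2)) := by
      field_simp; ring
    have htpos : 0 < t := by linarith [ht.1]
    refine ⟨h1, h2, ?_, ?_⟩
    · rw [e1]; apply div_pos (by nlinarith) (by linarith)
    · rw [e2]; apply div_pos (by nlinarith [mul_pos htpos hp0]) (by linarith)
  have hder : ∀ t ∈ Set.Icc θ 1, HasDerivAt G
      (2*p*(Real.log ((2-p*(1-t))/2) + 2*Real.log (2*(t*p/(p-2)) + -(1/2))
        - Real.log ((2*t-1)*p+2) - 2*Real.log (t*p/(p-2) + -(1/2)))) t := by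
    intro t ht
    obtain ⟨h1, h2, h3, h4⟩ := hfacts t ht
    have i1 : HasDerivAt (fun t : ℝ => (2*t-1)*p+2) (2*p) t := by
      simpa using ((((hasDerivAt_id t).const_mul 2).sub_const 1).mul_const p).add_const 2
    have p1 : HasDerivAt (fun t : ℝ => ((2*t-1)*p+2) * Real.log ((2*t-1)*p+2))
        ((Real.log ((2*t-1)*p+2) + 1)*(2*p)) t := by
      simpa [Function.comp_def] using (hasDerivAt_xlogx h2.ne').comp t i1
    have i2 : HasDerivAt (fun t : ℝ => 2-p*(1-t)) p t := by
      simpa using (((hasDerivAt_id t).const_sub 1).const_mul p).const_sub 2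
    have glog : HasDerivAt (fun t : ℝ => Real.log ((2-p*(1-t))/2))
        (((2-p*(1-t))/2)⁻¹ * (p/2)) t := by
      have i2' : HasDerivAt (fun t : ℝ => (2-p*(1-t))/2) (p/2) t := i2.div_const 2
      have hne : (2-p*(1-t))/2 ≠ 0 := by positivity
      simpa [Function.comp_def] using (Real.hasDerivAt_log hne).comp t i2'
    have p2 : HasDerivAt (fun t : ℝ => (2-p*(1-t)) * Real.log ((2-p*(1-t))/2))
        (p * Real.log ((2-p*(1-t))/2) + (2-p*(1-t)) * (((2-p*(1-t))/2)⁻¹ * (p/2))) t :=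
      i2.mul glog
    have j2 : HasDerivAt (fun t : ℝ => t*p/(p-2) + -(1/2)) (p/(p-2)) t := by
      simpa using (((hasDerivAt_id t).mul_const p).div_const (p-2)).add_const (-(1/2))
    have q2 : HasDerivAt (fun t : ℝ => (t*p/(p-2) + -(1/2)) * Real.log (t*p/(p-2) + -(1/2)))
        ((Real.log (t*p/(p-2) + -(1/2)) + 1)*(p/(p-2))) t := by
      simpa [Function.comp_def] using (hasDerivAt_xlogx h3.ne').comp t j2
    have j4 : HasDerivAt (fun t : ℝ => 2*(t*p/(p-2)) + -(1/2)) (2*(p/(p-2))) t := by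
      simpa using ((((hasDerivAt_id t).mul_const p).div_const (p-2)).const_mul 2).add_const
        (-(1/2))
    have q4 : HasDerivAt
        (fun t : ℝ => (2*(t*p/(p-2)) + -(1/2)) * Real.log (2*(t*p/(p-2)) + -(1/2)))
        ((Real.log (2*(t*p/(p-2)) + -(1/2)) + 1)*(2*(p/(p-2)))) t := by
      simpa [Function.comp_def] using (hasDerivAt_xlogx h4.ne').comp t j4
    have D3 : HasDerivAt (fun t : ℝ =>
        2*((p/(p-2) + -(1/2)) * Real.log (p/(p-2) + -(1/2)))
          - 2*((t*p/(p-2) + -(1/2)) * Real.log (t*p/(p-2) + -(1/2)))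
          - (2*(p/(p-2)) + -(1/2)) * Real.log (2*(p/(p-2)) + -(1/2))
          + (2*(t*p/(p-2)) + -(1/2)) * Real.log (2*(t*p/(p-2)) + -(1/2)))
        (0 - 2*((Real.log (t*p/(p-2) + -(1/2)) + 1)*(p/(p-2))) - 0
          + (Real.log (2*(t*p/(p-2)) + -(1/2)) + 1)*(2*(p/(p-2)))) t :=
      (((hasDerivAt_const t _).sub (q2.const_mul 2)).sub (hasDerivAt_const t _)).add q4
    have total := (((hasDerivAt_const t ((p+2)*Real.log (p+2))).sub p1).add
        (p2.const_mul 2)).add (D3.const_mul (2*(p-2)))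
    rw [hGdef]
    refine total.congr_deriv ?_
    have hane : (2-p*(1-t)) ≠ 0 := h1.ne'
    field_simp
    ring
  have hanti : StrictAntiOn G (Set.Icc θ 1) := by
    refine strictAntiOn_of_deriv_neg (convex_Icc θ 1) ?_ ?_
    · exact fun t ht => (hder t ht).continuousAt.continuousWithinAt
    · rw [interior_Icc]
      intro t ht
      rw [(hder t (Set.Ioo_subset_Icc_self ht)).deriv]
      obtain ⟨h1, h2, h3, h4⟩ := hfacts t (Set.Ioo_subset_Icc_self ht)
      have hXpos : 0 < ((2-p*(1-t))/2) * (2*(t*p/(p-2)) + -(1/2))^2 := by positivity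
      have hXY : ((2-p*(1-t))/2) * (2*(t*p/(p-2)) + -(1/2))^2
          < ((2*t-1)*p+2) * (t*p/(p-2) + -(1/2))^2 := by
        have e1 : t*p/(p-2) + -(1/2) = (2*t*p - p + 2)/(2*(p-2)) := by field_simp; ring
        have e2 : 2*(t*p/(p-2)) + -(1/2) = (4*t*p - p + 2)/(2*(p-2)) := by field_simp; ring
        have hpoly : (2 - p*(1-t))/2 * (4*t*p - p + 2)^2
            < ((2*t-1)*p+2) * (2*t*p - p + 2)^2 := by
          have key : ((2*t-1)*p+2) * (2*t*p - p + 2)^2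
              - (2 - p*(1-t))/2 * (4*t*p - p + 2)^2
              = (p-2)^2*(3*(2-p*(1-t)) + 2*(p-2))/2 := by ring
          have hposr : 0 < (p-2)^2*(3*(2-p*(1-t)) + 2*(p-2))/2 :=
            div_pos (mul_pos (by positivity) (by linarith)) two_pos
          linarith [key, hposr]
        rw [e1, e2, div_pow, div_pow, ← mul_div_assoc, ← mul_div_assoc]
        exact div_lt_div_of_pos_right hpoly (by positivity)
      have hlog := Real.log_lt_log hXpos hXY
      rw [Real.log_mul (by positivity) (by positivity),
        Real.log_mul h2.ne' (by positivity), Real.log_pow, Real.log_pow] at hlog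
      have h2p : (0:ℝ) < 2*p := by linarith
      apply mul_neg_of_pos_of_neg h2p
      push_cast at hlog
      linarith
  have h1mem : (1:ℝ) ∈ Set.Icc θ 1 := Set.right_mem_Icc.2 hθ2
  have hθmem : θ ∈ Set.Icc θ 1 := Set.left_mem_Icc.2 hθ2
  have hlt := hanti hθmem h1mem hθlt
  have hG1 : G 1 = 0 := by
    rw [hGdef]
    norm_num
  rw [hG1] at hlt
  exact hlt

set_option maxHeartbeats 1000000 in
/-- For `2 < p < 6` and `θ ∈ (1/2, 1]` with `2 − p(1−θ) > 0`, the constant `𝔠(p,θ)` of the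
paper satisfies `𝔠(p,θ) ≥ 1`, with equality if and only if `θ = 1`. -/
theorem stmt19 (p θ : ℝ) (hp : 2 < p) (hp6 : p < 6)
    (hθ1 : 1 / 2 < θ) (hθ2 : θ ≤ 1) (hpθ : 0 < 2 - p * (1 - θ))
    (C : ℝ)
    (hC : C = (p + 2) ^ ((p + 2) / ((2 * θ - 1) * p + 2)) / ((2 * θ - 1) * p + 2) *
      ((2 - p * (1 - θ)) / 2) ^ (2 * (2 - p * (1 - θ)) / ((2 * θ - 1) * p + 2)) *
      (Real.Gamma (p / (p - 2)) / Real.Gamma (θ * p / (p - 2))) ^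
        (4 * (p - 2) / ((2 * θ - 1) * p + 2)) *
      (Real.Gamma (2 * θ * p / (p - 2)) / Real.Gamma (2 * p / (p - 2))) ^
        (2 * (p - 2) / ((2 * θ - 1) * p + 2))) :
    1 ≤ C ∧ (C = 1 ↔ θ = 1) := by
  have hp2 : (0:ℝ) < p - 2 := by linarith
  have hp0 : (0:ℝ) < p := by linarith
  have hθ0 : (0:ℝ) < θ := by linarith
  have hS : (0:ℝ) < (2*θ-1)*p+2 := by nlinarith
  have hSne : ((2*θ-1)*p+2) ≠ 0 := hS.ne'
  have hb0 : (0:ℝ) < p/(p-2) := div_pos hp0 hp2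
  have hc1 : (1:ℝ) < θ*p/(p-2) := by
    rw [lt_div_iff₀ hp2]; nlinarith
  have hc0 : (0:ℝ) < θ*p/(p-2) := by linarith
  have hcb : θ*p/(p-2) ≤ p/(p-2) := by
    rw [div_le_div_iff₀ hp2 hp2]
    nlinarith [mul_nonneg (mul_nonneg (sub_nonneg.2 hθ2) hp0.le) hp2.le]
  have h2b0 : (0:ℝ) < 2*p/(p-2) := by positivity
  have h2c0 : (0:ℝ) < 2*θ*p/(p-2) := by positivity
  have hΓb := Real.Gamma_pos_of_pos hb0
  have hΓc := Real.Gamma_pos_of_pos hc0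
  have hΓ2b := Real.Gamma_pos_of_pos h2b0
  have hΓ2c := Real.Gamma_pos_of_pos h2c0
  have hp2pos : (0:ℝ) < p + 2 := by linarith
  have ha2 : (0:ℝ) < (2 - p*(1-θ))/2 := by linarith
  have hT1 : (0:ℝ) < (p + 2) ^ ((p + 2) / ((2 * θ - 1) * p + 2)) :=
    Real.rpow_pos_of_pos hp2pos _
  have hT2 : (0:ℝ) < ((2 - p * (1 - θ)) / 2) ^ (2 * (2 - p * (1 - θ)) / ((2 * θ - 1) * p + 2)) :=
    Real.rpow_pos_of_pos ha2 _
  have hT3 : (0:ℝ) < (Real.Gamma (p / (p - 2)) / Real.Gamma (θ * p / (p - 2))) ^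
      (4 * (p - 2) / ((2 * θ - 1) * p + 2)) :=
    Real.rpow_pos_of_pos (div_pos hΓb hΓc) _
  have hT4 : (0:ℝ) < (Real.Gamma (2 * θ * p / (p - 2)) / Real.Gamma (2 * p / (p - 2))) ^
      (2 * (p - 2) / ((2 * θ - 1) * p + 2)) :=
    Real.rpow_pos_of_pos (div_pos hΓ2c hΓ2b) _
  have hCpos : 0 < C := by
    rw [hC]
    exact mul_pos (mul_pos (mul_pos (div_pos hT1 hS) hT2) hT3) hT4
  have hlogC : Real.log C
      = ((p+2)/((2*θ-1)*p+2))*Real.log (p+2) - Real.log ((2*θ-1)*p+2)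
        + (2*(2-p*(1-θ))/((2*θ-1)*p+2))*Real.log ((2-p*(1-θ))/2)
        + (4*(p-2)/((2*θ-1)*p+2))*(Real.log (Real.Gamma (p/(p-2)))
            - Real.log (Real.Gamma (θ*p/(p-2))))
        + (2*(p-2)/((2*θ-1)*p+2))*(Real.log (Real.Gamma (2*θ*p/(p-2)))
            - Real.log (Real.Gamma (2*p/(p-2)))) := by
    rw [hC, Real.log_mul (mul_pos (mul_pos (div_pos hT1 hS) hT2) hT3).ne' hT4.ne',
      Real.log_mul (mul_pos (div_pos hT1 hS) hT2).ne' hT3.ne',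
      Real.log_mul (div_pos hT1 hS).ne' hT2.ne',
      Real.log_div hT1.ne' hSne,
      Real.log_rpow hp2pos, Real.log_rpow ha2,
      Real.log_rpow (div_pos hΓb hΓc), Real.log_rpow (div_pos hΓ2c hΓ2b),
      Real.log_div hΓb.ne' hΓc.ne', Real.log_div hΓ2c.ne' hΓ2b.ne']
  have hSlog : ((2*θ-1)*p+2) * Real.log C
      = (p+2)*Real.log (p+2) - ((2*θ-1)*p+2)*Real.log ((2*θ-1)*p+2)
        + 2*(2-p*(1-θ))*Real.log ((2-p*(1-θ))/2)
        + 4*(p-2)*(Real.log (Real.Gamma (p/(p-2))) - Real.log (Real.Gamma (θ*p/(p-2))))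
        + 2*(p-2)*(Real.log (Real.Gamma (2*θ*p/(p-2)))
            - Real.log (Real.Gamma (2*p/(p-2)))) := by
    rw [hlogC]
    field_simp
  have hCeq1 : θ = 1 → C = 1 := by
    intro h1
    subst h1
    have e1 : (2*(1:ℝ)-1)*p+2 = p+2 := by norm_num
    have e2 : (2:ℝ)-p*(1-1) = 2 := by norm_num
    have e3 : (1:ℝ)*p/(p-2) = p/(p-2) := by norm_num
    have e4 : (2:ℝ)*1*p/(p-2) = 2*p/(p-2) := by norm_num
    rw [hC, e1, e2, e3, e4, div_self hp2pos.ne', Real.rpow_one,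
      div_self (Real.Gamma_pos_of_pos hb0).ne',
      div_self (Real.Gamma_pos_of_pos h2b0).ne', div_self hp2pos.ne']
    norm_num [Real.one_rpow]
  have hstrict : θ < 1 → 1 < C := by
    intro hθlt
    have hkey := keyGamma (b := p/(p-2)) (c := θ*p/(p-2)) (by linarith) hcb
    have e2b : (2:ℝ)*(p/(p-2)) = 2*p/(p-2) := by ring
    have e2c : (2:ℝ)*(θ*p/(p-2)) = 2*θ*p/(p-2) := by ring
    rw [e2b, e2c] at hkey
    simp only [AA] at hkey
    have hmul := mul_le_mul_of_nonneg_left hkey (by linarith : (0:ℝ) ≤ 2*(p-2))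
    have hGpos := Gpos p θ hp hθ1 hθlt hpθ
    have hSlogpos : 0 < ((2*θ-1)*p+2) * Real.log C := by linarith [hSlog, hmul, hGpos]
    have hlogCpos : 0 < Real.log C := by
      by_contra h
      push_neg at h
      nlinarith [hSlogpos, hS, h]
    calc (1:ℝ) = Real.exp 0 := by rw [Real.exp_zero]
      _ < Real.exp (Real.log C) := Real.exp_lt_exp.2 hlogCpos
      _ = C := Real.exp_log hCpos
  constructor
  · rcases eq_or_lt_of_le hθ2 with h | h
    · exact le_of_eq (hCeq1 h).symm
    · exact (hstrict h).le
  · constructor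
    · intro hC1
      by_contra hne
      exact absurd hC1 (ne_of_gt (hstrict (lt_of_le_of_ne hθ2 hne)))
    · exact hCeq1
end
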